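/- Let u_n be the number of uniquely closable Motzkin trees with exactly n nodes and let U = Σ_{n≥0} u_n z^n be the corresponding formal power series with rational coefficients. Then U satisfies the algebraic equation z²·U⁴ − 2z·U³ + (z + 1)·U² − U + z² = 0 in the ring of formal power series. -/

import Mathlib

/-- Motzkin trees (binary-unary trees): leaf `v`, unary `l`, binary `a`. -/
inductive Mot : Type
  | v : Mot
  | l : Mot → Mot
  | a : Mot → Mot → Mot
deriving DecidableEq

/-- Lambda terms in de Bruijn form. -/
inductive Lam : Type
  | v : Nat → Lam
  | l : Lam → Lam
  | a : Lam → Lam → Lam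
deriving DecidableEq

/-- `t` is closed at depth `d`. -/
def Lam.closedAt : Lam → Nat → Prop
  | .v i, d => i < d
  | .l t, d => t.closedAt (d + 1)
  | .a s t, d => s.closedAt d ∧ t.closedAt d

/-- The Motzkin-tree skeleton of a de Bruijn term. -/
def Lam.skel : Lam → Mot
  | .v _ => .v
  | .l t => .l t.skel
  | .a s t => .a s.skel t.skel

/-- Total node count of a Motzkin tree. -/
def Mot.nodes : Mot → ℕ
  | .v => 1
  | .l t => 1 + t.nodes
  | .a s t => 1 + s.nodes + t.nodes

/-- A Motzkin tree is uniquely closable if exactly one closed term has it as skeleton. -/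
def Mot.UniquelyClosable (X : Mot) : Prop := ∃! t : Lam, t.closedAt 0 ∧ t.skel = X

/-- `u n` is the number of uniquely closable Motzkin trees with exactly `n` nodes. -/
noncomputable def u (n : ℕ) : ℕ := Nat.card {t : Mot // t.nodes = n ∧ t.UniquelyClosable}

/-- The ordinary generating function of the `u n`, as a formal power series over ℚ. -/
noncomputable def U : PowerSeries ℚ := PowerSeries.mk fun n => (u n : ℚ)

/-! ### auxiliary -/

/-- `goodb X d = true` iff every leaf of `X` has exactly one `l` above it,
given that there are `1 - d` lambdas still needed. -/
def goodb : Mot → ℕ → Bool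
  | .v, d => d == 1
  | .l t, d => goodb t (d + 1)
  | .a s t, d => goodb s d && goodb t d

lemma skel_eq_v {t : Lam} (h : t.skel = Mot.v) : ∃ i, t = Lam.v i := by
  cases t <;> simp [Lam.skel] at h ⊢

lemma ucAt : ∀ (X : Mot) (d : ℕ),
    (∃! t : Lam, t.closedAt d ∧ t.skel = X) ↔ goodb X d = true := by
  intro X
  induction X with
  | v =>
    intro d
    constructor
    · rintro ⟨t, ⟨hc, hs⟩, hu⟩
      obtain ⟨i, rfl⟩ := skel_eq_v hs
      simp only [Lam.closedAt] at hc
      simp only [goodb, beq_iff_eq]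
      by_contra hne
      have h2 : 2 ≤ d := by omega
      have h0 := hu (Lam.v 0) ⟨by simp [Lam.closedAt]; omega, rfl⟩
      have h1 := hu (Lam.v 1) ⟨by simp [Lam.closedAt]; omega, rfl⟩
      rw [← h1] at h0
      simp at h0
    · intro h
      simp only [goodb, beq_iff_eq] at h
      subst h
      refine ⟨Lam.v 0, ⟨by simp [Lam.closedAt], rfl⟩, ?_⟩
      rintro y ⟨hyc, hys⟩
      obtain ⟨i, rfl⟩ := skel_eq_v hys
      simp only [Lam.closedAt] at hyc
      have : i = 0 := by omega
      rw [this]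
  | l s ih =>
    intro d
    have key : (∃! t : Lam, t.closedAt d ∧ t.skel = Mot.l s) ↔
        (∃! t : Lam, t.closedAt (d + 1) ∧ t.skel = s) := by
      constructor
      · rintro ⟨t, ⟨hc, hs⟩, hu⟩
        cases t with
        | v i => simp [Lam.skel] at hs
        | a _ _ => simp [Lam.skel] at hs
        | l t' =>
          simp only [Lam.skel, Mot.l.injEq] at hs
          refine ⟨t', ⟨hc, hs⟩, ?_⟩
          rintro y ⟨hyc, hys⟩
          have := hu (Lam.l y) ⟨hyc, by simp [Lam.skel, hys]⟩
          simpa using this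
      · rintro ⟨t, ⟨hc, hs⟩, hu⟩
        refine ⟨Lam.l t, ⟨hc, by simp [Lam.skel, hs]⟩, ?_⟩
        rintro y ⟨hyc, hys⟩
        cases y with
        | v i => simp [Lam.skel] at hys
        | a _ _ => simp [Lam.skel] at hys
        | l y' =>
          simp only [Lam.skel, Mot.l.injEq] at hys
          have := hu y' ⟨hyc, hys⟩
          rw [this]
    rw [key, ih]
    simp [goodb]
  | a s t ihs iht =>
    intro d
    constructor
    · rintro ⟨w, ⟨hc, hs⟩, hu⟩
      cases w with
      | v i => simp [Lam.skel] at hs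
      | l _ => simp [Lam.skel] at hs
      | a p q =>
        simp only [Lam.skel, Mot.a.injEq] at hs
        obtain ⟨hcp, hcq⟩ := hc
        have hus : ∃! p' : Lam, p'.closedAt d ∧ p'.skel = s := by
          refine ⟨p, ⟨hcp, hs.1⟩, ?_⟩
          rintro y ⟨hyc, hys⟩
          have := hu (Lam.a y q) ⟨⟨hyc, hcq⟩, by simp [Lam.skel, hys, hs.2]⟩
          simp only [Lam.a.injEq] at this
          exact this.1
        have hut : ∃! q' : Lam, q'.closedAt d ∧ q'.skel = t := by
          refine ⟨q, ⟨hcq, hs.2⟩, ?_⟩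
          rintro y ⟨hyc, hys⟩
          have := hu (Lam.a p y) ⟨⟨hcp, hyc⟩, by simp [Lam.skel, hys, hs.1]⟩
          simp only [Lam.a.injEq] at this
          exact this.2
        simp [goodb, (ihs d).mp hus, (iht d).mp hut]
    · intro h
      simp only [goodb, Bool.and_eq_true] at h
      obtain ⟨p, ⟨hcp, hsp⟩, hup⟩ := (ihs d).mpr h.1
      obtain ⟨q, ⟨hcq, hsq⟩, huq⟩ := (iht d).mpr h.2
      refine ⟨Lam.a p q, ⟨⟨hcp, hcq⟩, by simp [Lam.skel, hsp, hsq]⟩, ?_⟩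
      rintro y ⟨hyc, hys⟩
      cases y with
      | v i => simp [Lam.skel] at hys
      | l _ => simp [Lam.skel] at hys
      | a y1 y2 =>
        simp only [Lam.skel, Mot.a.injEq] at hys
        rw [hup y1 ⟨hyc.1, hys.1⟩, huq y2 ⟨hyc.2, hys.2⟩]

lemma goodb_ge2 : ∀ (t : Mot) (d : ℕ), 2 ≤ d → goodb t d = false := by
  intro t
  induction t with
  | v => intro d hd; simp [goodb]; omega
  | l s ih => intro d hd; simp [goodb]; exact ih (d + 1) (by omega)
  | a s t ihs iht => intro d hd; simp [goodb]; intro h; exact iht d hd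

lemma Mot.one_le_nodes : ∀ t : Mot, 1 ≤ t.nodes := by
  intro t; cases t <;> simp [Mot.nodes] <;> omega

def motLe : ℕ → Finset Mot
  | 0 => ∅
  | n + 1 =>
    insert Mot.v (((motLe n).image Mot.l) ∪
      ((motLe n ×ˢ motLe n).image fun p => Mot.a p.1 p.2))

lemma mem_motLe : ∀ (n : ℕ) (t : Mot), t.nodes ≤ n → t ∈ motLe n := by
  intro n
  induction n with
  | zero =>
    intro t h
    have := Mot.one_le_nodes t
    omega
  | succ n ih =>
    intro t h
    cases t with
    | v => simp [motLe]
    | l s =>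
      simp only [motLe, Finset.mem_insert, Finset.mem_union, Finset.mem_image]
      right; left
      refine ⟨s, ih s ?_, rfl⟩
      simp only [Mot.nodes] at h
      omega
    | a s t =>
      simp only [motLe, Finset.mem_insert, Finset.mem_union, Finset.mem_image,
        Finset.mem_product, Prod.exists]
      right; right
      simp only [Mot.nodes] at h
      have hs := Mot.one_le_nodes s
      have ht := Mot.one_le_nodes t
      exact ⟨s, t, ⟨ih s (by omega), ih t (by omega)⟩, rfl⟩

/-- trees of size `n` good at depth 0 -/
def cset (n : ℕ) : Finset Mot := (motLe n).filter fun t => t.nodes = n ∧ goodb t 0 = true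
/-- trees of size `n` good at depth 1 -/
def dset (n : ℕ) : Finset Mot := (motLe n).filter fun t => t.nodes = n ∧ goodb t 1 = true

lemma mem_cset {t : Mot} {n : ℕ} : t ∈ cset n ↔ t.nodes = n ∧ goodb t 0 = true := by
  simp only [cset, Finset.mem_filter]
  constructor
  · rintro ⟨_, h⟩; exact h
  · rintro ⟨h1, h2⟩; exact ⟨mem_motLe n t (le_of_eq h1), h1, h2⟩

lemma mem_dset {t : Mot} {n : ℕ} : t ∈ dset n ↔ t.nodes = n ∧ goodb t 1 = true := by
  simp only [dset, Finset.mem_filter]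
  constructor
  · rintro ⟨_, h⟩; exact h
  · rintro ⟨h1, h2⟩; exact ⟨mem_motLe n t (le_of_eq h1), h1, h2⟩

/-- binary combinations -/
def bset (f : ℕ → Finset Mot) (n : ℕ) : Finset Mot :=
  (Finset.HasAntidiagonal.antidiagonal n).biUnion fun ij =>
    ((f ij.1) ×ˢ (f ij.2)).image fun p => Mot.a p.1 p.2

lemma mem_bset {f : ℕ → Finset Mot} {n : ℕ} {t : Mot} :
    t ∈ bset f n ↔ ∃ i j, i + j = n ∧ ∃ x ∈ f i, ∃ y ∈ f j, Mot.a x y = t := by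
  simp only [bset, Finset.mem_biUnion, Finset.mem_image, Finset.mem_product,
    Finset.HasAntidiagonal.mem_antidiagonal, Prod.exists]
  constructor
  · rintro ⟨i, j, hij, x, y, ⟨hx, hy⟩, h⟩
    exact ⟨i, j, hij, x, hx, y, hy, h⟩
  · rintro ⟨i, j, hij, x, hx, y, hy, h⟩
    exact ⟨i, j, hij, x, y, ⟨hx, hy⟩, h⟩

lemma card_bset {f : ℕ → Finset Mot} (hf : ∀ i t, t ∈ f i → t.nodes = i) (n : ℕ) :
    (bset f n).card = ∑ ij ∈ Finset.HasAntidiagonal.antidiagonal n, (f ij.1).card * (f ij.2).card := by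
  rw [bset, Finset.card_biUnion]
  · refine Finset.sum_congr rfl fun ij _ => ?_
    rw [Finset.card_image_of_injective, Finset.card_product]
    rintro ⟨x1, y1⟩ ⟨x2, y2⟩ h
    simpa [Prod.ext_iff, Mot.a.injEq] using h
  · rintro ⟨i1, j1⟩ h1 ⟨i2, j2⟩ h2 hne
    simp only [Finset.mem_coe, Finset.HasAntidiagonal.mem_antidiagonal] at h1 h2
    rw [Function.onFun, Finset.disjoint_left]
    rintro t ht1 ht2
    simp only [Finset.mem_image, Finset.mem_product, Prod.exists] at ht1 ht2
    obtain ⟨x1, y1, ⟨hx1, hy1⟩, rfl⟩ := ht1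
    obtain ⟨x2, y2, ⟨hx2, hy2⟩, heq⟩ := ht2
    obtain ⟨rfl, rfl⟩ : x2 = x1 ∧ y2 = y1 := by simpa [Mot.a.injEq] using heq
    have e1 := hf _ _ hx1; have e2 := hf _ _ hx2
    apply hne
    simp only [Prod.mk.injEq]
    omega

lemma dset_succ (n : ℕ) :
    dset (n + 1) = (if n = 0 then {Mot.v} else ∅) ∪ bset dset n := by
  ext t
  rw [Finset.mem_union, mem_dset]
  cases t with
  | v =>
    simp only [Mot.nodes, goodb, mem_bset]
    constructor
    · rintro ⟨h, -⟩
      left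
      have : n = 0 := by omega
      simp [this]
    · rintro (h | ⟨i, j, _, x, _, y, _, h⟩)
      · split at h <;> simp_all
      · simp at h
  | l s =>
    have h2 : goodb s 2 = false := goodb_ge2 s 2 le_rfl
    simp only [Mot.nodes, goodb, h2, mem_bset]
    constructor
    · rintro ⟨-, h⟩; simp at h
    · rintro (h | ⟨i, j, _, x, _, y, _, h⟩)
      · split at h <;> simp_all
      · simp at h
  | a s t =>
    simp only [Mot.nodes, goodb, Bool.and_eq_true, mem_bset]
    constructor
    · rintro ⟨hn, hs, ht⟩
      right
      exact ⟨s.nodes, t.nodes, by omega, s, mem_dset.mpr ⟨rfl, hs⟩,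
        t, mem_dset.mpr ⟨rfl, ht⟩, rfl⟩
    · rintro (h | ⟨i, j, hij, x, hx, y, hy, h⟩)
      · split at h <;> simp_all
      · obtain ⟨rfl, rfl⟩ : x = s ∧ y = t := by simpa [Mot.a.injEq] using h
        rw [mem_dset] at hx hy
        exact ⟨by omega, hx.2, hy.2⟩

lemma cset_succ (n : ℕ) :
    cset (n + 1) = (dset n).image Mot.l ∪ bset cset n := by
  ext t
  rw [Finset.mem_union, mem_cset]
  cases t with
  | v =>
    simp only [Mot.nodes, goodb, mem_bset, Finset.mem_image]
    constructor
    · rintro ⟨-, h⟩; simp at h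
    · rintro (⟨x, _, h⟩ | ⟨i, j, _, x, _, y, _, h⟩) <;> simp at h
  | l s =>
    simp only [Mot.nodes, goodb, mem_bset, Finset.mem_image]
    constructor
    · rintro ⟨hn, h⟩
      left
      exact ⟨s, mem_dset.mpr ⟨by omega, h⟩, rfl⟩
    · rintro (⟨x, hx, h⟩ | ⟨i, j, _, x, _, y, _, h⟩)
      · obtain rfl : x = s := by simpa using h
        rw [mem_dset] at hx
        exact ⟨by omega, hx.2⟩
      · simp at h
  | a s t =>
    simp only [Mot.nodes, goodb, Bool.and_eq_true, mem_bset, Finset.mem_image]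
    constructor
    · rintro ⟨hn, hs, ht⟩
      right
      exact ⟨s.nodes, t.nodes, by omega, s, mem_cset.mpr ⟨rfl, hs⟩,
        t, mem_cset.mpr ⟨rfl, ht⟩, rfl⟩
    · rintro (⟨x, _, h⟩ | ⟨i, j, hij, x, hx, y, hy, h⟩)
      · simp at h
      · obtain ⟨rfl, rfl⟩ : x = s ∧ y = t := by simpa [Mot.a.injEq] using h
        rw [mem_cset] at hx hy
        exact ⟨by omega, hx.2, hy.2⟩

lemma cset_zero : cset 0 = ∅ := by
  ext t
  simp only [mem_cset, Finset.notMem_empty, iff_false, not_and]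
  intro h
  have := Mot.one_le_nodes t
  omega

lemma dset_zero : dset 0 = ∅ := by
  ext t
  simp only [mem_dset, Finset.notMem_empty, iff_false, not_and]
  intro h
  have := Mot.one_le_nodes t
  omega

noncomputable abbrev cc (n : ℕ) : ℕ := (cset n).card
noncomputable abbrev dd (n : ℕ) : ℕ := (dset n).card

lemma cc_succ (n : ℕ) :
    cc (n + 1) = dd n + ∑ ij ∈ Finset.HasAntidiagonal.antidiagonal n, cc ij.1 * cc ij.2 := by
  rw [cc, cset_succ, Finset.card_union_of_disjoint, Finset.card_image_of_injective,
    card_bset (fun i t ht => (mem_cset.mp ht).1)]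
  · intro x y h; simpa using h
  · rw [Finset.disjoint_left]
    rintro t ht1 ht2
    simp only [Finset.mem_image] at ht1
    obtain ⟨x, -, rfl⟩ := ht1
    rw [mem_bset] at ht2
    obtain ⟨_, _, _, _, _, _, _, h⟩ := ht2
    simp at h

lemma dd_succ (n : ℕ) :
    dd (n + 1) = (if n = 0 then 1 else 0) +
      ∑ ij ∈ Finset.HasAntidiagonal.antidiagonal n, dd ij.1 * dd ij.2 := by
  rw [dd, dset_succ, Finset.card_union_of_disjoint,
    card_bset (fun i t ht => (mem_dset.mp ht).1)]
  · congr 1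
    split <;> simp
  · rw [Finset.disjoint_left]
    rintro t ht1 ht2
    rw [mem_bset] at ht2
    obtain ⟨_, _, _, _, _, _, _, h⟩ := ht2
    split at ht1
    · obtain rfl : t = Mot.v := by simpa using ht1
      simp at h
    · simp at ht1

/-! ### from counts to power series -/

lemma u_eq_cc (n : ℕ) : u n = cc n := by
  rw [u]
  have he : ∀ t : Mot, (t.nodes = n ∧ t.UniquelyClosable) ↔ t ∈ cset n := by
    intro t
    rw [mem_cset, Mot.UniquelyClosable, ucAt t 0]
  rw [Nat.card_congr (Equiv.subtypeEquivRight he)]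
  exact Nat.card_eq_finsetCard _

noncomputable def D : PowerSeries ℚ := PowerSeries.mk fun n => (dd n : ℚ)

lemma hD : D = PowerSeries.X + PowerSeries.X * D ^ 2 := by
  ext n
  rw [map_add]
  cases n with
  | zero =>
    simp only [D, PowerSeries.coeff_mk, PowerSeries.coeff_zero_eq_constantCoeff,
      map_mul, PowerSeries.constantCoeff_X, zero_mul, map_zero]
    have : dd 0 = 0 := by rw [dd, dset_zero]; simp
    simp [this]
  | succ n =>
    rw [sq, PowerSeries.coeff_succ_X_mul, PowerSeries.coeff_mul]
    simp only [D, PowerSeries.coeff_mk, PowerSeries.coeff_X]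
    rw [dd_succ n]
    push_cast
    rfl

lemma hU : U = PowerSeries.X * D + PowerSeries.X * U ^ 2 := by
  ext n
  rw [map_add]
  cases n with
  | zero =>
    simp only [U, D, PowerSeries.coeff_mk, PowerSeries.coeff_zero_eq_constantCoeff,
      map_mul, PowerSeries.constantCoeff_X, zero_mul, map_zero]
    have : u 0 = 0 := by rw [u_eq_cc, cc, cset_zero]; simp
    simp [this]
  | succ n =>
    rw [sq, PowerSeries.coeff_succ_X_mul, PowerSeries.coeff_succ_X_mul,
      PowerSeries.coeff_mul]
    simp only [U, D, PowerSeries.coeff_mk]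
    rw [u_eq_cc, cc_succ n]
    push_cast
    congr 1
    refine Finset.sum_congr rfl fun ij _ => ?_
    rw [u_eq_cc, u_eq_cc]

theorem stmt14 :
    (PowerSeries.X : PowerSeries ℚ) ^ 2 * U ^ 4 - 2 * PowerSeries.X * U ^ 3 +
      (PowerSeries.X + 1) * U ^ 2 - U + PowerSeries.X ^ 2 = 0 := by
  have hXD : PowerSeries.X * D =
      PowerSeries.X ^ 2 + (PowerSeries.X * D) ^ 2 := by
    calc PowerSeries.X * D
        = PowerSeries.X * (PowerSeries.X + PowerSeries.X * D ^ 2) := by rw [← hD]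
      _ = PowerSeries.X ^ 2 + (PowerSeries.X * D) ^ 2 := by ring
  linear_combination (PowerSeries.X * D + (U - PowerSeries.X * U ^ 2) - 1) * hU - hXD
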